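/- For every positive integer k, the graph G' = K_{k+1} \vee ((2k)K_2 \cup 2K_1) (the join of a complete graph on k+1 vertices with the disjoint union of 2k copies of K_2 and two isolated vertices) is connected but is not a P_{\geq 3}-factor covered graph. -/

import Mathlib

open SimpleGraph

section Defs

variable {V : Type*} {α β : Type*}

/-- A graph is *factor-critical* if deleting any vertex leaves a graph
with a perfect matching. -/
def FactorCritical (G : SimpleGraph V) : Prop :=
  ∀ v : V, ∃ M : (G.induce {u | u ≠ v}).Subgraph, M.IsPerfectMatching

/-- A *sun* is `K₁`, `K₂`, or a graph obtained from a factor-critical graph `R`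
with vertex set `Y = {y₁, …, yₙ}` by adding `n` new vertices `x₁, …, xₙ` and the
pendant edges `y₁x₁, …, yₙxₙ`. -/
def IsSun (G : SimpleGraph V) : Prop :=
  (Nat.card V = 1) ∨ (Nat.card V = 2 ∧ G.Connected) ∨
  (∃ Y : Set V, Y.Nonempty ∧ FactorCritical (G.induce Y) ∧
    ∃ f : (Yᶜ : Set V) ≃ Y, ∀ x : (Yᶜ : Set V), G.neighborSet ↑x = {(↑(f x) : V)})

/-- `sunCount G` is the number of connected components of `G` that are suns. -/
noncomputable def sunCount (G : SimpleGraph V) : ℕ :=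
  Nat.card {c : G.ConnectedComponent // IsSun (G.induce c.supp)}

/-- Number of isolated vertices of a graph. -/
noncomputable def isolatedCount (G : SimpleGraph V) : ℕ :=
  {v : V | ∀ w : V, ¬ G.Adj v w}.ncard

/-- A set of vertices is independent if no two of its vertices are adjacent. -/
def IndepSet (G : SimpleGraph V) (A : Set V) : Prop :=
  A.Pairwise fun u v => ¬ G.Adj u v

/-- The independence number of a graph: the maximum size of an independent set. -/
noncomputable def indepNum (G : SimpleGraph V) : ℕ :=
  sSup {n | ∃ A : Set V, IndepSet G A ∧ A.ncard = n}

/-- The neighborhood `N_G(A)` of a set `A` of vertices: the union of the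
neighborhoods of the vertices of `A`. -/
def neighborSetOf (G : SimpleGraph V) (A : Set V) : Set V :=
  {v | ∃ a ∈ A, G.Adj a v}

/-- `H` is a `P_{≥3}`-factor of `G`: a spanning subgraph of `G` each of whose
connected components is a path on at least `3` vertices. -/
def IsPathFactor (G H : SimpleGraph V) : Prop :=
  H ≤ G ∧ ∀ c : H.ConnectedComponent,
    ∃ n : ℕ, 3 ≤ n ∧ Nonempty ((H.induce c.supp) ≃g pathGraph n)

/-- A connected graph `G` is a `P_{≥3}`-factor covered graph if every edge of `G`
is contained in some `P_{≥3}`-factor of `G`. -/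
def PathFactorCovered (G : SimpleGraph V) : Prop :=
  G.Connected ∧ ∀ e ∈ G.edgeSet, ∃ H : SimpleGraph V, IsPathFactor G H ∧ e ∈ H.edgeSet

/-- A graph `G` is a `P_{≥3}`-factor uniform graph if `G - e` is a
`P_{≥3}`-factor covered graph for every edge `e` of `G`. -/
def PathFactorUniform (G : SimpleGraph V) : Prop :=
  ∀ e ∈ G.edgeSet, PathFactorCovered (G.deleteEdges {e})

/-- The parameter `ε(X)` from Zhou–Zhang's characterization of
`P_{≥3}`-factor covered graphs. -/
noncomputable def eps (G : SimpleGraph V) (X : Set V) : ℕ := by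
  classical
  exact if ¬ IndepSet G X then 2
    else if X.Nonempty ∧ ∃ c : (G.induce Xᶜ).ConnectedComponent,
        ¬ IsSun ((G.induce Xᶜ).induce c.supp) then 1
    else 0

/-- A graph is 2-edge-connected if it is connected and stays connected after
the deletion of any single edge. -/
def TwoEdgeConnected (G : SimpleGraph V) : Prop :=
  G.Connected ∧ ∀ e ∈ G.edgeSet, (G.deleteEdges {e}).Connected

/-- A graph is `k`-connected if it has more than `k` vertices and remains
connected after deleting any fewer than `k` vertices. -/
def KConnected [Fintype V] (k : ℕ) (G : SimpleGraph V) : Prop :=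
  k < Fintype.card V ∧ ∀ S : Set V, S.ncard < k → (G.induce Sᶜ).Connected

/-- The join `G₁ ∨ G₂` of two graphs: take disjoint copies of `G₁` and `G₂`
and add all edges between them. -/
def graphJoin (G : SimpleGraph α) (H : SimpleGraph β) : SimpleGraph (α ⊕ β) where
  Adj x y :=
    match x, y with
    | Sum.inl a, Sum.inl b => G.Adj a b
    | Sum.inr a, Sum.inr b => H.Adj a b
    | Sum.inl _, Sum.inr _ => True
    | Sum.inr _, Sum.inl _ => True
  symm := by
    constructor
    rintro (a | a) (b | b) h
    · exact h.symm
    · trivial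
    · trivial
    · exact h.symm
  loopless := by
    constructor
    rintro (a | a) h
    · exact G.irrefl h
    · exact H.irrefl h

/-- The disjoint union of two graphs. -/
def graphSum (G : SimpleGraph α) (H : SimpleGraph β) : SimpleGraph (α ⊕ β) where
  Adj x y :=
    match x, y with
    | Sum.inl a, Sum.inl b => G.Adj a b
    | Sum.inr a, Sum.inr b => H.Adj a b
    | _, _ => False
  symm := by
    constructor
    rintro (a | a) (b | b) h
    · exact h.symm
    · exact h.elim
    · exact h.elim
    · exact h.symm
  loopless := by
    constructor
    rintro (a | a) h
    · exact G.irrefl h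
    · exact H.irrefl h

/-- `mK2 m` is the disjoint union of `m` copies of `K₂`. -/
def mK2 (m : ℕ) : SimpleGraph (Fin m × Fin 2) where
  Adj p q := p.1 = q.1 ∧ p.2 ≠ q.2
  symm := by constructor; rintro p q ⟨h1, h2⟩; exact ⟨h1.symm, h2.symm⟩
  loopless := by constructor; rintro p ⟨h1, h2⟩; exact h2 rfl

end Defs

section Aux
variable {W : Type*}


lemma aux_pathNbr {n : ℕ} (i : Fin n) :
    ∃ g : {j : Fin n // (pathGraph n).Adj i j} → Fin 2, Function.Injective g := by
  refine ⟨fun j => if (j : Fin n).val = i.val + 1 then 0 else 1, ?_⟩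
  rintro ⟨a, ha⟩ ⟨b, hb⟩ h
  rw [pathGraph_adj] at ha hb
  simp only at h
  have hab : (a : Fin n).val = (b : Fin n).val := by split_ifs at h <;> omega
  exact Subtype.ext (Fin.ext hab)

lemma aux_mem_supp_of_adj {H : SimpleGraph W} {v w : W} (h : H.Adj v w) :
    w ∈ (H.connectedComponentMk v).supp :=
  (ConnectedComponent.mem_supp_iff _ _).mpr (ConnectedComponent.sound h.symm.reachable)

lemma aux_pf_nbr_emb {G H : SimpleGraph W} (hH : IsPathFactor G H) (v : W) :
    ∃ g : {w : W // H.Adj v w} → Fin 2, Function.Injective g := by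
  obtain ⟨n, hn3, ⟨φ⟩⟩ := hH.2 (H.connectedComponentMk v)
  have hv : v ∈ (H.connectedComponentMk v).supp := rfl
  obtain ⟨g, hg⟩ := aux_pathNbr (φ ⟨v, hv⟩)
  refine ⟨fun w => g ⟨φ ⟨(w : W), aux_mem_supp_of_adj w.2⟩, φ.map_adj_iff.mpr w.2⟩, ?_⟩
  rintro ⟨a, ha⟩ ⟨b, hb⟩ h
  have := hg h
  simp only [Subtype.mk.injEq] at this
  have := φ.toEquiv.injective this
  simpa using this

lemma aux_pf_exists_nbr {G H : SimpleGraph W} (hH : IsPathFactor G H) (v : W) :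
    ∃ w, H.Adj v w := by
  obtain ⟨n, hn3, ⟨φ⟩⟩ := hH.2 (H.connectedComponentMk v)
  have hv : v ∈ (H.connectedComponentMk v).supp := rfl
  set i := φ ⟨v, hv⟩ with hi
  have : ∃ j : Fin n, (pathGraph n).Adj i j := by
    by_cases hlt : i.val + 1 < n
    · exact ⟨⟨i.val + 1, hlt⟩, pathGraph_adj.mpr (Or.inl rfl)⟩
    · have h1 : 1 ≤ i.val := by have := i.isLt; omega
      exact ⟨⟨i.val - 1, by omega⟩, pathGraph_adj.mpr (Or.inr (by simp; omega))⟩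
  obtain ⟨j, hj⟩ := this
  refine ⟨(φ.symm j : _), ?_⟩
  have h2 := φ.symm.map_adj_iff.mpr hj
  have h3 : φ.symm i = ⟨v, hv⟩ := by rw [hi]; exact φ.symm_apply_apply _
  rw [h3] at h2
  exact h2

lemma aux_pf_card_supp {G H : SimpleGraph W} (hH : IsPathFactor G H) (c : H.ConnectedComponent) :
    3 ≤ Nat.card c.supp := by
  obtain ⟨n, hn3, ⟨φ⟩⟩ := hH.2 c
  have : Nat.card c.supp = n := by
    rw [Nat.card_congr φ.toEquiv]; simp
  omega

lemma aux_walk_closed {H : SimpleGraph W} {S : Set W}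
    (hcl : ∀ s ∈ S, ∀ w, H.Adj s w → w ∈ S) :
    ∀ {a u : W} (_ : H.Walk a u), a ∈ S → u ∈ S := by
  intro a u p
  induction p with
  | nil => exact id
  | cons h _ ih => exact fun ha => ih (hcl _ ha _ h)

end Aux

/-- **Remark 2 (continued).** For every `k ≥ 1`, the graph
`G' = K_{k+1} ∨ ((2k)K₂ ∪ 2K₁)` is connected but is not a `P_{≥3}`-factor
covered graph. -/
theorem stmt7 (k : ℕ) (hk : 1 ≤ k) :
    letI G' := graphJoin (completeGraph (Fin (k + 1)))
      (graphSum (mK2 (2 * k)) (⊥ : SimpleGraph (Fin 2)))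
    G'.Connected ∧ ¬ PathFactorCovered G' := by
  classical
  refine ⟨?_, ?_⟩
  · -- Connectedness
    have key : ∀ w, (graphJoin (completeGraph (Fin (k + 1)))
        (graphSum (mK2 (2 * k)) (⊥ : SimpleGraph (Fin 2)))).Reachable w (Sum.inl 0) := by
      rintro (x | r)
      · rcases eq_or_ne x 0 with rfl | hx
        · exact Reachable.refl _
        · exact Adj.reachable (show (graphJoin (completeGraph (Fin (k + 1)))
            (graphSum (mK2 (2 * k)) (⊥ : SimpleGraph (Fin 2)))).Adj
              (Sum.inl x) (Sum.inl 0) from hx)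
      · exact Adj.reachable (show (graphJoin (completeGraph (Fin (k + 1)))
          (graphSum (mK2 (2 * k)) (⊥ : SimpleGraph (Fin 2)))).Adj
            (Sum.inr r) (Sum.inl 0) from trivial)
    exact ⟨fun u v => (key u).trans (key v).symm⟩
  · -- Not path-factor covered
    set G' := graphJoin (completeGraph (Fin (k + 1)))
        (graphSum (mK2 (2 * k)) (⊥ : SimpleGraph (Fin 2))) with hG'def
    rintro ⟨-, hcov⟩
    have h01 : (0 : Fin (k+1)) ≠ 1 :=
      Fin.ne_of_val_ne (by rw [Fin.val_zero, Fin.val_one', Nat.mod_eq_of_lt (by omega)]; omega)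
    have hadjE : G'.Adj (Sum.inl 0) (Sum.inl 1) := h01
    obtain ⟨H, hH, heH⟩ := hcov s(Sum.inl 0, Sum.inl 1) (G'.mem_edgeSet.mpr hadjE)
    have hadj01 : H.Adj (Sum.inl 0) (Sum.inl 1) := H.mem_edgeSet.mp heH
    -- every isolated vertex has an H-neighbour on the left
    have hIso : ∀ j : Fin 2, ∃ x : Fin (k+1), H.Adj (Sum.inl x) (Sum.inr (Sum.inr j)) := by
      intro j
      obtain ⟨w, hw⟩ := aux_pf_exists_nbr hH (Sum.inr (Sum.inr j))
      have hGadj := hH.1 hw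
      rcases w with x | (p | j')
      · exact ⟨x, hw.symm⟩
      · exact False.elim hGadj
      · exact False.elim hGadj
    -- every K₂ component has an H-edge to the left
    have hK2 : ∀ i : Fin (2*k), ∃ x : Fin (k+1), ∃ b : Fin 2,
        H.Adj (Sum.inl x) (Sum.inr (Sum.inl (i, b))) := by
      intro i
      by_contra hno
      push_neg at hno
      set S : Set (Fin (k+1) ⊕ ((Fin (2*k) × Fin 2) ⊕ Fin 2)) :=
        {Sum.inr (Sum.inl (i, 0)), Sum.inr (Sum.inl (i, 1))} with hS
      have hmm : ∀ (p q : Fin (2*k) × Fin 2),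
          G'.Adj (Sum.inr (Sum.inl p)) (Sum.inr (Sum.inl q)) → p.1 = q.1 ∧ p.2 ≠ q.2 :=
        fun p q h => h
      have hcl : ∀ s ∈ S, ∀ w, H.Adj s w → w ∈ S := by
        rintro s hs w hw
        have hGadj := hH.1 hw
        have hs' : s = Sum.inr (Sum.inl (i, 0)) ∨ s = Sum.inr (Sum.inl (i, 1)) := hs
        rcases hs' with rfl | rfl
        · rcases w with x | (⟨i', b'⟩ | j')
          · exact absurd hw.symm (hno x 0)
          · obtain ⟨h1, h2⟩ := hmm _ _ hGadj
            simp only at h1 h2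
            subst h1
            fin_cases b'
            · exact absurd rfl h2
            · exact Or.inr rfl
          · exact False.elim hGadj
        · rcases w with x | (⟨i', b'⟩ | j')
          · exact absurd hw.symm (hno x 1)
          · obtain ⟨h1, h2⟩ := hmm _ _ hGadj
            simp only at h1 h2
            subst h1
            fin_cases b'
            · exact Or.inl rfl
            · exact absurd rfl h2
          · exact False.elim hGadj
      have hmemS : (Sum.inr (Sum.inl (i, 0)) :
          Fin (k+1) ⊕ ((Fin (2*k) × Fin 2) ⊕ Fin 2)) ∈ S := Set.mem_insert _ _
      have hsub : (H.connectedComponentMk (Sum.inr (Sum.inl (i, 0)))).supp ⊆ S := by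
        intro u hu
        have hr : H.Reachable (Sum.inr (Sum.inl (i, 0))) u :=
          (ConnectedComponent.exact ((ConnectedComponent.mem_supp_iff _ _).mp hu)).symm
        obtain ⟨p⟩ := hr
        exact aux_walk_closed hcl p hmemS
      have h3 := aux_pf_card_supp hH (H.connectedComponentMk (Sum.inr (Sum.inl (i, 0))))
      have h2 : Nat.card (H.connectedComponentMk (Sum.inr (Sum.inl (i, 0)))).supp ≤ 2 := by
        rw [Nat.card_coe_set_eq]
        have hle := Set.ncard_le_ncard hsub (Set.toFinite S)
        rwa [hS, Set.ncard_pair (by simp)] at hle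
      omega
    choose xK bK hK using hK2
    choose xI hI using hIso
    choose gg hgg using fun x : Fin (k+1) => aux_pf_nbr_emb hH (Sum.inl x)
    -- injection from the 2k+4 "tokens" into crossing-pair witnesses
    have hex : ∃ fP : (Fin (2*k) ⊕ Fin 2) ⊕ Fin 2 →
        {p : Fin (k+1) × (Fin (k+1) ⊕ ((Fin (2*k) × Fin 2) ⊕ Fin 2)) //
          H.Adj (Sum.inl p.1) p.2}, Function.Injective fP := by
      refine ⟨fun u => Sum.elim (Sum.elim
        (fun i => ⟨(xK i, Sum.inr (Sum.inl (i, bK i))), hK i⟩)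
        (fun j => ⟨(xI j, Sum.inr (Sum.inr j)), hI j⟩))
        (fun j => ![⟨((0 : Fin (k+1)), Sum.inl 1), hadj01⟩,
                    ⟨((1 : Fin (k+1)), Sum.inl 0), hadj01.symm⟩] j) u, ?_⟩
      rintro ((i | j) | j) ((i' | j') | j') h
      · simp only [Sum.elim_inl, Subtype.mk.injEq, Prod.mk.injEq, Sum.inr.injEq,
          Sum.inl.injEq] at h
        rw [h.2.1]
      · simp at h
      · fin_cases j' <;> simp at h
      · simp at h
      · simp only [Sum.elim_inl, Sum.elim_inr, Subtype.mk.injEq, Prod.mk.injEq,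
          Sum.inr.injEq] at h
        rw [h.2]
      · fin_cases j' <;> simp at h
      · fin_cases j <;> simp at h
      · fin_cases j <;> simp at h
      · fin_cases j <;> fin_cases j'
        · rfl
        · simp only [Sum.elim_inr, Fin.mk_zero, Fin.mk_one, Matrix.cons_val_zero,
            Matrix.cons_val_one, Matrix.head_cons, Subtype.mk.injEq, Prod.mk.injEq,
            Sum.inl.injEq] at h
          exact absurd h.1 h01
        · simp only [Sum.elim_inr, Fin.mk_zero, Fin.mk_one, Matrix.cons_val_zero,
            Matrix.cons_val_one, Matrix.head_cons, Subtype.mk.injEq, Prod.mk.injEq,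
            Sum.inl.injEq] at h
          exact absurd h.1 h01.symm
        · rfl
    have hexg : ∃ gP : {p : Fin (k+1) × (Fin (k+1) ⊕ ((Fin (2*k) × Fin 2) ⊕ Fin 2)) //
          H.Adj (Sum.inl p.1) p.2} → Fin (k+1) × Fin 2, Function.Injective gP := by
      refine ⟨fun p => (p.1.1, gg p.1.1 ⟨p.1.2, p.2⟩), ?_⟩
      rintro ⟨⟨x, w⟩, hxw⟩ ⟨⟨x', w'⟩, hxw'⟩ heq
      simp only [Prod.mk.injEq] at heq
      obtain ⟨h1, h2⟩ := heq
      subst h1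
      have hw : w = w' := congrArg Subtype.val (hgg x h2)
      subst hw
      rfl
    obtain ⟨fP, hfP⟩ := hex
    obtain ⟨gP, hgP⟩ := hexg
    have hcard := Nat.card_le_card_of_injective (gP ∘ fP) (hgP.comp hfP)
    simp only [Nat.card_eq_fintype_card, Fintype.card_sum, Fintype.card_prod,
      Fintype.card_fin] at hcard
    omega
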